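/- Let n ≥ 3 and let u be a word in x_1,...,x_n in which every variable occurs exactly twice, such that u[x_1,x_2,x_3] = (x_2 x_3 x_1)(x_2 x_1 x_3), and: for each odd 1 ≤ i < n, u[x_i,x_{i+1}] = x_{i+1} x_i x_{i+1} x_i; for each even 2 ≤ i < n, u[x_i,x_{i+1}] = x_i x_{i+1} x_i x_{i+1}; and for each 1 ≤ i < j ≤ n with j−i ∈ {2,3}, u[x_i,x_j] ∈ {x_j x_i² x_j, x_i x_j² x_i}. Then u equals the maelstrom word M_n. -/

import Mathlib

/-- The maelstrom words: `M 1 = x₁²`; if `k` is odd and `M k = m · xₖ` then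
`M (k+1) = x_{k+1} · m · x_{k+1} · xₖ`; if `k` is even and `M k = xₖ · m'` then
`M (k+1) = xₖ · x_{k+1} · m' · x_{k+1}`. -/
def maelW : ℕ → List ℕ
  | 0 => []
  | 1 => [1, 1]
  | (k+2) =>
    if (k+1) % 2 = 1 then (k+2) :: ((maelW (k+1)).dropLast ++ [k+2, k+1])
    else (k+1) :: (k+2) :: ((maelW (k+1)).tail ++ [k+2])

/-- Projection of a word to the two variables `i`, `j` (deleting all other letters). -/
def proj2 (u : List ℕ) (i j : ℕ) : List ℕ := u.filter (fun a => a == i || a == j)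

lemma marked1 {c : ℕ} {X X' Y Y' : List ℕ} (hX : c ∉ X) (hX' : c ∉ X')
    (h : X ++ c :: Y = X' ++ c :: Y') : X = X' ∧ Y = Y' := by
  induction X generalizing X' with
  | nil =>
    cases X' with
    | nil => simpa using h
    | cons a t =>
      rw [List.nil_append, List.cons_append] at h
      obtain ⟨rfl, h2⟩ := List.cons.inj h
      exact absurd List.mem_cons_self hX'
  | cons a s ih =>
    cases X' with
    | nil =>
      rw [List.nil_append, List.cons_append] at h
      obtain ⟨rfl, _⟩ := List.cons.inj h
      exact absurd List.mem_cons_self hX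
    | cons b t =>
      rw [List.cons_append, List.cons_append] at h
      obtain ⟨rfl, h2⟩ := List.cons.inj h
      have hs : c ∉ s := fun hc => hX (List.mem_cons_of_mem _ hc)
      have ht : c ∉ t := fun hc => hX' (List.mem_cons_of_mem _ hc)
      obtain ⟨h3, h4⟩ := ih hs ht h2
      exact ⟨by rw [h3], h4⟩

lemma marked2 {c : ℕ} {X X' Y Y' Z Z' : List ℕ} (hX : c ∉ X) (hY : c ∉ Y)
    (hX' : c ∉ X') (hY' : c ∉ Y')
    (h : X ++ c :: (Y ++ c :: Z) = X' ++ c :: (Y' ++ c :: Z')) : X = X' ∧ Y = Y' ∧ Z = Z' := by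
  obtain ⟨h1, h2⟩ := marked1 hX hX' h
  obtain ⟨h3, h4⟩ := marked1 hY hY' h2
  exact ⟨h1, h3, h4⟩

lemma split1 {c : ℕ} {l : List ℕ} (h : l.count c = 1) :
    ∃ X Y, c ∉ X ∧ c ∉ Y ∧ l = X ++ c :: Y := by
  induction l with
  | nil => simp at h
  | cons a t ih =>
    by_cases hac : c = a
    · subst hac
      have h0 : t.count c = 0 := by simpa [List.count_cons] using h
      exact ⟨[], t, by simp, List.count_eq_zero.mp h0, by simp⟩
    · have h1 : t.count c = 1 := by simpa [List.count_cons, hac, Ne.symm hac] using h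
      obtain ⟨X, Y, hX, hY, hl⟩ := ih h1
      refine ⟨a :: X, Y, ?_, hY, by simp [hl]⟩
      intro hc
      rcases List.mem_cons.mp hc with h' | h'
      · exact hac h'
      · exact hX h'

lemma split2 {c : ℕ} {l : List ℕ} (h : l.count c = 2) :
    ∃ X Y Z, c ∉ X ∧ c ∉ Y ∧ c ∉ Z ∧ l = X ++ c :: Y ++ c :: Z := by
  induction l with
  | nil => simp at h
  | cons a t ih =>
    by_cases hac : c = a
    · subst hac
      have h1 : t.count c = 1 := by simpa [List.count_cons] using h
      obtain ⟨Y, Z, hY, hZ, hl⟩ := split1 h1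
      exact ⟨[], Y, Z, by simp, hY, hZ, by simp [hl]⟩
    · have h1 : t.count c = 2 := by simpa [List.count_cons, hac, Ne.symm hac] using h
      obtain ⟨X, Y, Z, hX, hY, hZ, hl⟩ := ih h1
      refine ⟨a :: X, Y, Z, ?_, hY, hZ, by simp [hl]⟩
      intro hc
      rcases List.mem_cons.mp hc with h' | h'
      · exact hac h'
      · exact hX h'

lemma proj2_decomp {l1 l2 l3 : List ℕ} {c i : ℕ} (hic : i ≠ c)
    (h1 : c ∉ l1) (h2 : c ∉ l2) (h3 : c ∉ l3) :
    proj2 (l1 ++ c :: l2 ++ c :: l3) i c =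
      l1.filter (· == i) ++ c :: l2.filter (· == i) ++ c :: l3.filter (· == i) := by
  have key : ∀ (l : List ℕ), c ∉ l → l.filter (fun a => a == i || a == c) = l.filter (· == i) := by
    intro l hl
    apply List.filter_congr
    intro a ha
    have hne : a ≠ c := fun e => hl (e ▸ ha)
    simp [hne]
  unfold proj2
  simp only [List.filter_append, List.filter_cons]
  rw [key l1 h1, key l2 h2, key l3 h3]
  simp

lemma counts_of_proj {l1 l2 l3 : List ℕ} {c i : ℕ} (hic : i ≠ c)
    (h1 : c ∉ l1) (h2 : c ∉ l2) (h3 : c ∉ l3)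
    (A B C : List ℕ) (hA : ∀ a ∈ A, a = i) (hB : ∀ a ∈ B, a = i) (hC : ∀ a ∈ C, a = i)
    (hp : proj2 (l1 ++ c :: l2 ++ c :: l3) i c = A ++ c :: B ++ c :: C) :
    l1.count i = A.length ∧ l2.count i = B.length ∧ l3.count i = C.length := by
  rw [proj2_decomp hic h1 h2 h3] at hp
  have notmem : ∀ (l : List ℕ), c ∉ l.filter (· == i) := by
    intro l hc
    have h2' := (List.mem_filter.mp hc).2
    have hci : c = i := by simpa using h2'
    exact hic hci.symm
  have hcA : c ∉ A := fun hc => hic (hA c hc).symm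
  have hcB : c ∉ B := fun hc => hic (hB c hc).symm
  obtain ⟨e1, e2, e3⟩ := marked2 (notmem l1) (notmem l2) hcA hcB
    (by simpa [List.append_assoc] using hp)
  refine ⟨?_, ?_, ?_⟩
  · rw [List.count, List.countP_eq_length_filter, e1]
  · rw [List.count, List.countP_eq_length_filter, e2]
  · rw [List.count, List.countP_eq_length_filter, e3]

lemma maelW_step (k : ℕ) : maelW (k+2) =
    if (k+1) % 2 = 1 then (k+2) :: ((maelW (k+1)).dropLast ++ [k+2, k+1])
    else (k+1) :: (k+2) :: ((maelW (k+1)).tail ++ [k+2]) := rfl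

lemma maelW_shape (m : ℕ) :
    ((m+3) % 2 = 1 → ∃ mid : List ℕ,
      maelW (m+3) = (m+2) :: (m+3) :: (mid ++ [m+2, m+1, m+3]) ∧ ∀ a ∈ mid, a ≤ m+1) ∧
    ((m+3) % 2 = 0 → ∃ mid : List ℕ,
      maelW (m+3) = (m+3) :: (m+1) :: (m+2) :: (mid ++ [m+1, m, m+3, m+2]) ∧ ∀ a ∈ mid, a ≤ m) := by
  induction m with
  | zero =>
    constructor
    · intro _
      exact ⟨[1], by decide, by simp⟩
    · intro h; simp at h
  | succ m ih =>
    have hstep : maelW (m+1+3) =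
        if (m+3) % 2 = 1 then (m+4) :: ((maelW (m+3)).dropLast ++ [m+4, m+3])
        else (m+3) :: (m+4) :: ((maelW (m+3)).tail ++ [m+4]) := maelW_step (m+2)
    constructor
    · intro hodd
      have he : (m+3) % 2 = 0 := by omega
      obtain ⟨mid, hv, hb⟩ := ih.2 he
      refine ⟨(m+1) :: (m+2) :: (mid ++ [m+1, m]), ?_, ?_⟩
      · rw [hstep, if_neg (by omega), hv]
        simp
      · intro a ha
        simp at ha
        rcases ha with h | h | h | h | h
        · omega
        · omega
        · have := hb a h; omega
        · omega
        · omega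
    · intro heven
      have ho : (m+3) % 2 = 1 := by omega
      obtain ⟨mid, hv, hb⟩ := ih.1 ho
      refine ⟨mid, ?_, ?_⟩
      · rw [hstep, if_pos (by omega)]
        have hv' : maelW (m+3) = ((m+2) :: (m+3) :: (mid ++ [m+2, m+1])) ++ [m+3] := by
          rw [hv]; simp
        rw [hv', List.dropLast_concat]
        simp
      · intro a ha; have := hb a ha; omega


/-- Implication (iii) → (iv) of Proposition 5.1: a word `u` in `x₁,…,xₙ` (`n ≥ 3`) in
which every variable occurs exactly twice, with `u[x₁,x₂,x₃] = (x₂x₃x₁)(x₂x₁x₃)`,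
whose two-variable projections satisfy the stated conditions, equals the maelstrom
word `M n`. -/
theorem maelW_unique (n : ℕ) (hn : 3 ≤ n) (u : List ℕ)
    (hvars : ∀ a ∈ u, 1 ≤ a ∧ a ≤ n)
    (hocc : ∀ i : ℕ, 1 ≤ i → i ≤ n → u.count i = 2)
    (h123 : u.filter (fun a => a == 1 || a == 2 || a == 3) = [2, 3, 1, 2, 1, 3])
    (hodd : ∀ i : ℕ, 1 ≤ i → i < n → Odd i → proj2 u i (i+1) = [i+1, i, i+1, i])
    (heven : ∀ i : ℕ, 2 ≤ i → i < n → Even i → proj2 u i (i+1) = [i, i+1, i, i+1])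
    (h23 : ∀ i j : ℕ, 1 ≤ i → i < j → j ≤ n → (j - i = 2 ∨ j - i = 3) →
      proj2 u i j = [j, i, i, j] ∨ proj2 u i j = [i, j, j, i]) :
    u = maelW n := by
  induction n, hn using Nat.le_induction generalizing u with
  | base =>
    have hall : ∀ a ∈ u, ((a == 1 : Bool) || a == 2 || a == 3) = true := by
      intro a ha
      have := hvars a ha
      simp only [Bool.or_eq_true, beq_iff_eq]
      omega
    exact ((List.filter_eq_self.mpr hall).symm.trans h123).trans rfl
  | succ n hn ih =>

    obtain ⟨m, rfl⟩ : ∃ m, n = m + 3 := ⟨n - 3, by omega⟩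
    have hcu : u.count (m+4) = 2 := by
      have := hocc (m+4) (by omega) (by omega)
      simpa using this
    obtain ⟨l1, l2, l3, nc1, nc2, nc3, rfl⟩ := split2 hcu
    -- hypotheses for the projected word
    have hvars' : ∀ a ∈ l1 ++ l2 ++ l3, 1 ≤ a ∧ a ≤ m+3 := by
      intro a ha
      simp only [List.mem_append] at ha
      have hane : a ≠ m+4 := by
        rintro rfl
        rcases ha with (h | h) | h
        exacts [nc1 h, nc2 h, nc3 h]
      have hmem : a ∈ l1 ++ (m+4) :: l2 ++ (m+4) :: l3 := by
        simp only [List.mem_append, List.mem_cons]; tauto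
      have := hvars a hmem
      omega
    have hocc' : ∀ i : ℕ, 1 ≤ i → i ≤ m+3 → (l1 ++ l2 ++ l3).count i = 2 := by
      intro i hi1 hi2
      have h := hocc i hi1 (by omega)
      have hne : i ≠ m+4 := by omega
      have hne2 : ¬ (m+4 = i) := by omega
      simp only [List.count_append, List.count_cons, hne, hne2, beq_iff_eq, if_false] at h ⊢
      omega
    have hP123 : ((m+4 == 1 : Bool) || (m+4 == 2 : Bool) || (m+4 == 3 : Bool)) = false := by
      simp
    have h123' : (l1 ++ l2 ++ l3).filter (fun a => a == 1 || a == 2 || a == 3)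
        = [2, 3, 1, 2, 1, 3] := by
      simp only [List.filter_append, List.filter_cons, hP123, Bool.false_eq_true,
        if_false] at h123 ⊢
      simpa [List.append_assoc] using h123
    have hproj : ∀ i j : ℕ, i ≤ m+3 → j ≤ m+3 →
        proj2 (l1 ++ l2 ++ l3) i j = proj2 (l1 ++ (m+4) :: l2 ++ (m+4) :: l3) i j := by
      intro i j hi hj
      have hP : ((m+4 == i : Bool) || (m+4 == j : Bool)) = false := by
        simp only [Bool.or_eq_false_iff, beq_eq_false_iff_ne]
        omega
      unfold proj2
      simp only [List.filter_append, List.filter_cons, hP, Bool.false_eq_true, if_false]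
    have hodd' : ∀ i : ℕ, 1 ≤ i → i < m+3 → Odd i →
        proj2 (l1 ++ l2 ++ l3) i (i+1) = [i+1, i, i+1, i] := by
      intro i h1 h2 h3
      rw [hproj i (i+1) (by omega) (by omega)]
      exact hodd i h1 (by omega) h3
    have heven' : ∀ i : ℕ, 2 ≤ i → i < m+3 → Even i →
        proj2 (l1 ++ l2 ++ l3) i (i+1) = [i, i+1, i, i+1] := by
      intro i h1 h2 h3
      rw [hproj i (i+1) (by omega) (by omega)]
      exact heven i h1 (by omega) h3
    have h23' : ∀ i j : ℕ, 1 ≤ i → i < j → j ≤ m+3 → (j - i = 2 ∨ j - i = 3) →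
        proj2 (l1 ++ l2 ++ l3) i j = [j, i, i, j] ∨
        proj2 (l1 ++ l2 ++ l3) i j = [i, j, j, i] := by
      intro i j h1 h2 h3 h4
      rw [hproj i j (by omega) (by omega)]
      exact h23 i j h1 h2 (by omega) h4
    have hV : l1 ++ l2 ++ l3 = maelW (m+3) :=
      ih (l1 ++ l2 ++ l3) hvars' hocc' h123' hodd' heven' h23'
    clear hvars hocc h123 hvars' hocc' h123' hodd' heven' h23' hproj hP123 hcu
    rcases Nat.mod_two_eq_zero_or_one (m+3) with hpar | hpar
    · -- EVEN case : maelW (m+3) = (m+3) :: (m+1) :: (m+2) :: (mid ++ [m+1, m, m+3, m+2])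
      obtain ⟨mid, hsh, hb⟩ := (maelW_shape m).2 hpar
      rw [hsh] at hV
      have hpn := heven (m+3) (by omega) (by omega) (Nat.even_iff.mpr hpar)
      obtain ⟨k1, k2, k3⟩ := counts_of_proj (by omega) nc1 nc2 nc3
        [m+3] [m+3] [] (by simp) (by simp) (by simp) hpn
      have hk3 : (m+3) ∉ l3 := List.count_eq_zero.mp (by simpa using k3)
      rcases h23 (m+2) (m+4) (by omega) (by omega) (by omega) (by omega) with hq | hq
      · -- branch A : proj (m+2) = [m+4, m+2, m+2, m+4]
        obtain ⟨q1, q2, q3⟩ := counts_of_proj (by omega) nc1 nc2 nc3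
          [] [m+2, m+2] [] (by simp) (by simp) (by simp) hq
        have hq1 : (m+2) ∉ l1 := List.count_eq_zero.mp (by simpa using q1)
        have hq3 : (m+2) ∉ l3 := List.count_eq_zero.mp (by simpa using q3)
        -- l3 = []
        rcases List.eq_nil_or_concat l3 with rfl | ⟨L, b, rfl⟩
        swap
        · exfalso
          rw [List.concat_eq_append] at hV
          have hV' : (l1 ++ l2 ++ L) ++ [b]
              = ((m+3) :: (m+1) :: (m+2) :: (mid ++ [m+1, m, m+3])) ++ [m+2] := by
            simp only [List.append_assoc, List.cons_append, List.nil_append,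
              List.append_nil] at hV ⊢
            exact hV
          obtain ⟨-, hb'⟩ := List.append_inj' hV' rfl
          have : b = m+2 := by simpa using hb'
          subst this
          exact hq3 (by simp [List.concat_eq_append])
        · rw [List.append_nil] at hV
          rcases h23 (m+1) (m+4) (by omega) (by omega) (by omega) (by omega) with hr | hr
          · -- proj (m+1) = [m+4, m+1, m+1, m+4]
            obtain ⟨r1, r2, r3⟩ := counts_of_proj (by omega) nc1 nc2 nc3
              [] [m+1, m+1] [] (by simp) (by simp) (by simp) hr
            have hr1 : (m+1) ∉ l1 := List.count_eq_zero.mp (by simpa using r1)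
            -- l1 = [m+3]
            have hl1 : l1 = [m+3] := by
              cases l1 with
              | nil => simp at k1
              | cons a t =>
                simp only [List.cons_append] at hV
                obtain ⟨rfl, hV2⟩ := List.cons.inj hV
                cases t with
                | nil => rfl
                | cons b s =>
                  exfalso
                  simp only [List.cons_append] at hV2
                  obtain ⟨rfl, -⟩ := List.cons.inj hV2
                  exact hr1 (by simp)
            subst hl1
            simp only [List.cons_append, List.nil_append] at hV
            obtain ⟨-, hV2⟩ := List.cons.inj hV
            -- l2 = tail of maelW (m+3)
            have hgoal : maelW (m+3+1)
                = (m+3) :: (m+4) :: ((maelW (m+3)).tail ++ [m+4]) := by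
              rw [show m+3+1 = (m+2)+2 from rfl, maelW_step, if_neg (by omega)]
            rw [hgoal, hsh]
            rw [hV2]
            simp
          · -- proj (m+1) = [m+1, m+4, m+4, m+1] : impossible since l3 = []
            obtain ⟨r1, r2, r3⟩ := counts_of_proj (by omega) nc1 nc2 nc3
              [m+1] [] [m+1] (by simp) (by simp) (by simp) hr
            simp at r3
      · -- branch B : proj (m+2) = [m+2, m+4, m+4, m+2] : impossible
        exfalso
        obtain ⟨q1, q2, q3⟩ := counts_of_proj (by omega) nc1 nc2 nc3
          [m+2] [] [m+2] (by simp) (by simp) (by simp) hq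
        have hq2 : (m+2) ∉ l2 := List.count_eq_zero.mp (by simpa using q2)
        obtain ⟨A, B, hA, hB, rfl⟩ := split1 (by simpa using q1 : l1.count (m+2) = 1)
        obtain ⟨P, Q, hP, hQ, rfl⟩ := split1 (by simpa using q3 : l3.count (m+2) = 1)
        have hV' : A ++ (m+2) :: ((B ++ l2 ++ P) ++ (m+2) :: Q)
            = [m+3, m+1] ++ (m+2) :: ((mid ++ [m+1, m, m+3]) ++ (m+2) :: []) := by
          simp only [List.append_assoc, List.cons_append, List.nil_append,
            List.append_nil] at hV ⊢
          exact hV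
        have hmidfree : (m+2) ∉ mid ++ [m+1, m, m+3] := by
          intro hmem
          rcases List.mem_append.mp hmem with h | h
          · have := hb _ h; omega
          · simp at h <;> omega
        have hBLP : (m+2) ∉ B ++ l2 ++ P := by
          intro hmem
          simp only [List.mem_append] at hmem
          rcases hmem with (h | h) | h
          exacts [hB h, hq2 h, hP h]
        have hhead : (m+2) ∉ ([m+3, m+1] : List ℕ) := by
          intro hmem
          simp at hmem <;> omega
        obtain ⟨e1, e2, e3⟩ := marked2 hA hBLP hhead hmidfree hV'
        rcases h23 (m+1) (m+4) (by omega) (by omega) (by omega) (by omega) with hr | hr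
        · -- (m+1) ∉ l1, but m+1 ∈ A ⊆ l1
          obtain ⟨r1, r2, r3⟩ := counts_of_proj (by omega) nc1 nc2 nc3
            [] [m+1, m+1] [] (by simp) (by simp) (by simp) hr
          have hr1 : (m+1) ∉ A ++ (m+2) :: B := List.count_eq_zero.mp (by simpa using r1)
          exact hr1 (by rw [e1]; simp)
        · -- count (m+1) l3 = 1 with l3 = P ++ [m+2], Q = []
          obtain ⟨r1, r2, r3⟩ := counts_of_proj (by omega) nc1 nc2 nc3
            [m+1] [] [m+1] (by simp) (by simp) (by simp) hr
          subst e3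
          rcases List.eq_nil_or_concat P with rfl | ⟨L, b, rfl⟩
          · simp [List.count_cons] at r3
          · rw [List.concat_eq_append] at e2
            have e2' : ((B ++ l2) ++ L) ++ [b] = (mid ++ [m+1, m]) ++ [m+3] := by
              simp only [List.append_assoc, List.cons_append, List.nil_append,
                List.append_nil] at e2 ⊢
              exact e2
            obtain ⟨-, hb'⟩ := List.append_inj' e2' rfl
            have : b = m+3 := by simpa using hb'
            subst this
            exact hk3 (by simp [List.concat_eq_append])
    · -- ODD case : maelW (m+3) = (m+2) :: (m+3) :: (mid ++ [m+2, m+1, m+3])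
      obtain ⟨mid, hsh, hb⟩ := (maelW_shape m).1 hpar
      rw [hsh] at hV
      have hpn := hodd (m+3) (by omega) (by omega) (Nat.odd_iff.mpr hpar)
      obtain ⟨k1, k2, k3⟩ := counts_of_proj (by omega) nc1 nc2 nc3
        [] [m+3] [m+3] (by simp) (by simp) (by simp) hpn
      have hk1 : (m+3) ∉ l1 := List.count_eq_zero.mp (by simpa using k1)
      rcases h23 (m+2) (m+4) (by omega) (by omega) (by omega) (by omega) with hq | hq
      · -- branch A : proj (m+2) = [m+4, m+2, m+2, m+4]
        obtain ⟨q1, q2, q3⟩ := counts_of_proj (by omega) nc1 nc2 nc3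
          [] [m+2, m+2] [] (by simp) (by simp) (by simp) hq
        have hq1 : (m+2) ∉ l1 := List.count_eq_zero.mp (by simpa using q1)
        -- l1 = []
        have hl1 : l1 = [] := by
          cases l1 with
          | nil => rfl
          | cons a t =>
            exfalso
            simp only [List.cons_append] at hV
            obtain ⟨rfl, -⟩ := List.cons.inj hV
            exact hq1 (by simp)
        subst hl1
        rw [List.nil_append] at hV
        rcases h23 (m+1) (m+4) (by omega) (by omega) (by omega) (by omega) with hr | hr
        · -- proj (m+1) = [m+4, m+1, m+1, m+4]
          obtain ⟨r1, r2, r3⟩ := counts_of_proj (by omega) nc1 nc2 nc3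
            [] [m+1, m+1] [] (by simp) (by simp) (by simp) hr
          have hr3 : (m+1) ∉ l3 := List.count_eq_zero.mp (by simpa using r3)
          obtain ⟨X, Y, hX, hY, rfl⟩ := split1 (by simpa using k2 : l2.count (m+3) = 1)
          obtain ⟨P, Q, hP, hQ, rfl⟩ := split1 (by simpa using k3 : l3.count (m+3) = 1)
          have hV' : X ++ (m+3) :: ((Y ++ P) ++ (m+3) :: Q)
              = [m+2] ++ (m+3) :: ((mid ++ [m+2, m+1]) ++ (m+3) :: []) := by
            simp only [List.append_assoc, List.cons_append, List.nil_append,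
              List.append_nil] at hV ⊢
            exact hV
          have hYP : (m+3) ∉ Y ++ P := by
            intro hmem
            rcases List.mem_append.mp hmem with h | h
            exacts [hY h, hP h]
          have hhead : (m+3) ∉ ([m+2] : List ℕ) := by
            simp only [List.mem_singleton]; omega
          have hmidfree : (m+3) ∉ mid ++ [m+2, m+1] := by
            intro hmem
            rcases List.mem_append.mp hmem with h | h
            · have := hb _ h; omega
            · simp at h <;> omega
          obtain ⟨e1, e2, e3⟩ := marked2 hX hYP hhead hmidfree hV'
          rcases List.eq_nil_or_concat P with rfl | ⟨L, b, rfl⟩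
          · rw [List.append_nil] at e2
            subst e1 e2 e3
            have hgoal : maelW (m+3+1)
                = (m+4) :: ((maelW (m+3)).dropLast ++ [m+4, m+3]) := by
              rw [show m+3+1 = (m+2)+2 from rfl, maelW_step, if_pos (by omega)]
            have hdl : (maelW (m+3)).dropLast = (m+2) :: (m+3) :: (mid ++ [m+2, m+1]) := by
              have hsh' : maelW (m+3)
                  = ((m+2) :: (m+3) :: (mid ++ [m+2, m+1])) ++ [m+3] := by
                rw [hsh]; simp
              rw [hsh', List.dropLast_concat]
            rw [hgoal, hdl]
            simp
          · exfalso
            rw [List.concat_eq_append] at e2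
            have e2' : (Y ++ L) ++ [b] = (mid ++ [m+2]) ++ [m+1] := by
              simp only [List.append_assoc, List.cons_append, List.nil_append,
                List.append_nil] at e2 ⊢
              exact e2
            obtain ⟨-, hb'⟩ := List.append_inj' e2' rfl
            have : b = m+1 := by simpa using hb'
            subst this
            exact hr3 (by simp [List.concat_eq_append])
        · -- proj (m+1) = [m+1, m+4, m+4, m+1] : impossible since l1 = []
          obtain ⟨r1, r2, r3⟩ := counts_of_proj (by omega) nc1 nc2 nc3
            [m+1] [] [m+1] (by simp) (by simp) (by simp) hr
          simp at r1
      · -- branch B : proj (m+2) = [m+2, m+4, m+4, m+2] : impossible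
        exfalso
        obtain ⟨q1, q2, q3⟩ := counts_of_proj (by omega) nc1 nc2 nc3
          [m+2] [] [m+2] (by simp) (by simp) (by simp) hq
        have hq2 : (m+2) ∉ l2 := List.count_eq_zero.mp (by simpa using q2)
        obtain ⟨A, B, hA, hB, rfl⟩ := split1 (by simpa using q1 : l1.count (m+2) = 1)
        have hV' : A ++ (m+2) :: (B ++ l2 ++ l3)
            = [] ++ (m+2) :: ((m+3) :: (mid ++ [m+2, m+1, m+3])) := by
          simp only [List.append_assoc, List.cons_append, List.nil_append,
            List.append_nil] at hV ⊢
          exact hV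
        obtain ⟨e1, e2⟩ := marked1 hA (by simp) hV'
        rcases h23 (m+1) (m+4) (by omega) (by omega) (by omega) (by omega) with hr | hr
        · -- (m+1) ∉ l3
          obtain ⟨r1, r2, r3⟩ := counts_of_proj (by omega) nc1 nc2 nc3
            [] [m+1, m+1] [] (by simp) (by simp) (by simp) hr
          have hr3 : (m+1) ∉ l3 := List.count_eq_zero.mp (by simpa using r3)
          obtain ⟨P, Q, hP, hQ, rfl⟩ := split1 (by simpa using q3 : l3.count (m+2) = 1)
          have e2' : ((B ++ l2) ++ P) ++ (m+2) :: Q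
              = ((m+3) :: mid) ++ (m+2) :: [m+1, m+3] := by
            simp only [List.append_assoc, List.cons_append, List.nil_append,
              List.append_nil] at e2 ⊢
            exact e2
          have hBLP : (m+2) ∉ (B ++ l2) ++ P := by
            intro hmem
            simp only [List.mem_append] at hmem
            rcases hmem with (h | h) | h
            exacts [hB h, hq2 h, hP h]
          have hhead : (m+2) ∉ (m+3) :: mid := by
            intro hmem
            rcases List.mem_cons.mp hmem with h | h
            · omega
            · have := hb _ h; omega
          obtain ⟨-, e4⟩ := marked1 hBLP hhead e2'
          apply hr3
          rw [e4]
          simp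
        · -- count (m+1) l1 = 1
          obtain ⟨r1, r2, r3⟩ := counts_of_proj (by omega) nc1 nc2 nc3
            [m+1] [] [m+1] (by simp) (by simp) (by simp) hr
          subst e1
          cases B with
          | nil =>
            simp [List.count_cons] at r1 <;> omega
          | cons b s =>
            simp only [List.nil_append, List.cons_append] at e2
            obtain ⟨rfl, -⟩ := List.cons.inj e2
            exact hk1 (by simp)
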